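/- If z_1, ..., z_N are pairwise distinct complex numbers, Γ_1, ..., Γ_N are real, and V_n := Σ_{j≠n} Γ_j / conj(z_n − z_j) = 0 for every n (an equilibrium), then L = Σ_{1≤j<k≤N} Γ_j Γ_k = 0. -/

import Mathlib

open Finset Complex

theorem equilibrium_L_zero (N : ℕ) (Γ : Fin N → ℝ) (z : Fin N → ℂ)
    (hz : Function.Injective z)
    (heq : ∀ n, (∑ j ∈ univ.filter (· ≠ n),
      (Γ j : ℂ) / (starRingEnd ℂ) (z n - z j)) = 0) :
    (∑ j, ∑ k, if j < k then Γ j * Γ k else 0) = 0 := by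
  -- conjugated equilibrium
  have hconj : ∀ n, (∑ j ∈ univ.filter (· ≠ n),
      (Γ j : ℂ) / (z n - z j)) = 0 := by
    intro n
    have h := congrArg (starRingEnd ℂ) (heq n)
    simpa [map_sum, map_div₀, Complex.conj_ofReal] using h
  -- F n j
  set F : Fin N → Fin N → ℂ :=
    fun n j => if j ≠ n then (Γ n : ℂ) * Γ j * (z n / (z n - z j)) else 0 with hF
  have hS : (∑ n, ∑ j, F n j) = 0 := by
    refine Finset.sum_eq_zero fun n _ => ?_
    have : (∑ j, F n j) = (Γ n : ℂ) * z n * ∑ j ∈ univ.filter (· ≠ n),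
        (Γ j : ℂ) / (z n - z j) := by
      rw [Finset.mul_sum, Finset.sum_filter]
      refine Finset.sum_congr rfl fun j _ => ?_
      by_cases h : j ≠ n <;> simp [hF, h] <;> ring
    rw [this, hconj n, mul_zero]
  -- symmetrized sum
  have hkey : ∀ n j : Fin N, F n j + F j n = (if j ≠ n then ((Γ n : ℂ) * Γ j) else 0) := by
    intro n j
    by_cases h : j = n
    · simp [hF, h]
    · have hnn : n ≠ j := fun hh => h hh.symm
      have hzn : z n ≠ z j := fun hh => h (hz hh).symm
      have hzn' : z j ≠ z n := fun hh => h (hz hh)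
      have hne : z n - z j ≠ 0 := sub_ne_zero.mpr hzn
      have hne' : z j - z n ≠ 0 := sub_ne_zero.mpr hzn'
      rw [hF]
      simp only [if_pos h, if_pos hnn]
      field_simp
      ring
  have hT : (∑ n, ∑ j, (if j ≠ n then ((Γ n : ℂ) * Γ j) else 0)) = 0 := by
    have h2 : (∑ n, ∑ j, (F n j + F j n)) = 0 := by
      rw [Finset.sum_congr rfl fun n _ => Finset.sum_add_distrib]
      rw [Finset.sum_add_distrib, hS, Finset.sum_comm (f := fun n j => F j n), hS, add_zero]
    calc (∑ n, ∑ j, (if j ≠ n then ((Γ n : ℂ) * Γ j) else 0))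
        = ∑ n, ∑ j, (F n j + F j n) :=
          Finset.sum_congr rfl fun n _ => Finset.sum_congr rfl fun j _ => (hkey n j).symm
      _ = 0 := h2
  -- split into < and >
  have hsplit : (∑ n, ∑ j, (if j ≠ n then ((Γ n : ℂ) * Γ j) else 0)) =
      2 * ∑ n, ∑ j, (if n < j then ((Γ n : ℂ) * Γ j) else 0) := by
    have : ∀ n j : Fin N, (if j ≠ n then ((Γ n : ℂ) * Γ j) else 0) =
        (if n < j then ((Γ n : ℂ) * Γ j) else 0) +
        (if j < n then ((Γ n : ℂ) * Γ j) else 0) := by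
      intro n j
      rcases lt_trichotomy n j with h | h | h
      · simp [h, h.ne', h.not_gt, ne_eq]
      · simp [h, lt_irrefl]
      · simp [h, h.ne, h.not_gt, ne_eq]
    rw [Finset.sum_congr rfl fun n _ => Finset.sum_congr rfl fun j _ => this n j]
    simp only [Finset.sum_add_distrib]
    rw [Finset.sum_comm (f := fun n j => if j < n then ((Γ n : ℂ) * Γ j) else 0)]
    have : (∑ n, ∑ j, (if n < j then ((Γ j : ℂ) * Γ n) else 0)) =
        ∑ n, ∑ j, (if n < j then ((Γ n : ℂ) * Γ j) else 0) := by
      refine Finset.sum_congr rfl fun n _ => Finset.sum_congr rfl fun j _ => ?_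
      by_cases h : n < j <;> simp [h, mul_comm]
    rw [this]; ring
  have hC : (∑ n, ∑ j, (if n < j then ((Γ n : ℂ) * Γ j) else 0)) = 0 := by
    have h := hsplit ▸ hT
    rcases mul_eq_zero.mp h with h | h
    · exact absurd h two_ne_zero
    · exact h
  have : ((∑ j, ∑ k, if j < k then Γ j * Γ k else 0 : ℝ) : ℂ) = 0 := by
    push_cast
    rw [← hC]
    refine Finset.sum_congr rfl fun n _ => Finset.sum_congr rfl fun j _ => ?_
    by_cases h : n < j <;> simp [h]
  exact_mod_cast this
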